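/- Let G = (A, (SPath^{T_i}_{w_i})_{i∈[n]}) be an n-player shortest-path game on a possibly infinite arena, with a target T_i ⊆ V and a weight function w_i : E → ℕ for each player i. A play π = v_0 v_1 … is the outcome from v_0 of some Nash equilibrium if and only if: (i) for every player i whose target T_i is not visited by π and every j ∈ ℕ, v_j ∉ W_i(Reach(T_i)); and (ii) for every player i whose target T_i is visited by π and every j ≤ min{k ∈ ℕ : v_k ∈ T_i}, SPath^{T_i}_{w_i}(π_{≥j}) ≤ val_i(v_j), where π_{≥j} denotes the suffix of π from position j, W_i(Reach(T_i)) is the winning region of player i in their coalition game for Reach(T_i), and val_i(v) is the value of v in player i's coalition game with cost SPath^{T_i}_{w_i}. -/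

import Mathlib

open scoped ENNReal Classical

/-- An `n`-player arena on a (possibly infinite) directed graph: an edge relation
with no deadlocks, together with an assignment of each vertex to its owner. -/
structure Arena (V : Type) (n : ℕ) where
  E : V → V → Prop
  owner : V → Fin n
  no_deadlock : ∀ v, ∃ v', E v v'

namespace Arena

variable {V : Type} {n : ℕ}

/-- A play: an infinite sequence of vertices following edges. -/
def IsPlay (A : Arena V n) (π : ℕ → V) : Prop := ∀ j, A.E (π j) (π (j + 1))

/-- A strategy: given the past history (the earlier vertices, oldest first) and the
current vertex, pick an `E`-successor of the current vertex. -/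
structure Strategy (A : Arena V n) where
  next : List V → V → V
  valid : ∀ h v, A.E v (next h v)

/-- The list of the first `j` vertices of a play. -/
def pref (π : ℕ → V) (j : ℕ) : List V := (List.range j).map π

/-- A play is consistent with the strategy `σ` used by player `i`. -/
def Consistent (A : Arena V n) (i : Fin n) (σ : A.Strategy) (π : ℕ → V) : Prop :=
  ∀ j, A.owner (π j) = i → π (j + 1) = σ.next (pref π j) (π j)

/-- A memoryless strategy only depends on the current vertex. -/
def Memoryless {A : Arena V n} (σ : A.Strategy) : Prop :=
  ∀ h h' v, σ.next h v = σ.next h' v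

def outcomeAux (A : Arena V n) (σ : Fin n → A.Strategy) (v0 : V) : ℕ → List V × V
  | 0 => ([], v0)
  | j + 1 =>
      let p := outcomeAux A σ v0 j
      (p.1 ++ [p.2], (σ (A.owner p.2)).next p.1 p.2)

/-- The outcome of the strategy profile `σ` from `v0`: the unique play from `v0`
consistent with every strategy of the profile. -/
def outcome (A : Arena V n) (σ : Fin n → A.Strategy) (v0 : V) (j : ℕ) : V :=
  (outcomeAux A σ v0 j).2

/-- Reachability objective: visit `T`. -/
def ReachObj (T : Set V) : Set (ℕ → V) := {π | ∃ j, π j ∈ T}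

/-- Safety objective: never visit `T`. -/
def SafeObj (T : Set V) : Set (ℕ → V) := {π | ∀ j, π j ∉ T}

/-- Büchi objective: visit `T` infinitely often. -/
def BuchiObj (T : Set V) : Set (ℕ → V) := {π | ∀ j, ∃ k, j ≤ k ∧ π k ∈ T}

/-- co-Büchi objective: visit `T` only finitely often. -/
def CoBuchiObj (T : Set V) : Set (ℕ → V) := {π | ∃ j, ∀ k, j ≤ k → π k ∉ T}

/-- Shortest-path cost of a play: the total weight up to the first visit of `T`,
and `⊤` if `T` is never visited. -/
noncomputable def spCost (w : V → V → ℕ) (T : Set V) (π : ℕ → V) : ℝ≥0∞ :=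
  if ∃ k, π k ∈ T then
    (Finset.range (sInf {k | π k ∈ T})).sum fun j => (w (π j) (π (j + 1)) : ℝ≥0∞)
  else ⊤

/-- Winning region of player `p` (whose objective is `Ω`) in a two-player game:
vertices from which `p` has a strategy all of whose consistent plays lie in `Ω`. -/
def WinRegion (A : Arena V 2) (p : Fin 2) (Ω : Set (ℕ → V)) : Set V :=
  {v | ∃ σ : A.Strategy, ∀ π, A.IsPlay π → π 0 = v → A.Consistent p σ π → π ∈ Ω}

/-- Lower value `inf_{σ₁} sup_{σ₂}` of a two-player zero-sum game with cost `c`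
(minimised by player 1, maximised by player 2). -/
noncomputable def valIS (A : Arena V 2) (c : (ℕ → V) → ℝ≥0∞) (v : V) : ℝ≥0∞ :=
  ⨅ σ1 : A.Strategy, ⨆ σ2 : A.Strategy, c (outcome A ![σ1, σ2] v)

/-- Upper value `sup_{σ₂} inf_{σ₁}`. -/
noncomputable def valSI (A : Arena V 2) (c : (ℕ → V) → ℝ≥0∞) (v : V) : ℝ≥0∞ :=
  ⨆ σ2 : A.Strategy, ⨅ σ1 : A.Strategy, c (outcome A ![σ1, σ2] v)

/-- Nash equilibrium from `v0` for cost functions (each player minimises):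
no unilateral deviation decreases the deviator's cost. -/
def IsNECost (A : Arena V n) (cost : Fin n → (ℕ → V) → ℝ≥0∞)
    (σ : Fin n → A.Strategy) (v0 : V) : Prop :=
  ∀ (i : Fin n) (τ : A.Strategy),
    cost i (outcome A σ v0) ≤ cost i (outcome A (Function.update σ i τ) v0)

/-- Nash equilibrium from `v0` for objectives: if a unilateral deviation of player `i`
satisfies `Ω i`, then so does the equilibrium outcome. -/
def IsNEObj (A : Arena V n) (Ω : Fin n → Set (ℕ → V))
    (σ : Fin n → A.Strategy) (v0 : V) : Prop :=
  ∀ (i : Fin n) (τ : A.Strategy),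
    outcome A (Function.update σ i τ) v0 ∈ Ω i → outcome A σ v0 ∈ Ω i

/-- The coalition arena of player `i`: player `i` (as player `0`) against all others. -/
def coalition (A : Arena V n) (i : Fin n) : Arena V 2 where
  E := A.E
  owner := fun v => if A.owner v = i then 0 else 1
  no_deadlock := A.no_deadlock

/-- Winning region of player `i` in their coalition game for objective `Ω`. -/
def coalWin (A : Arena V n) (i : Fin n) (Ω : Set (ℕ → V)) : Set V :=
  WinRegion (coalition A i) 0 Ω

/-- Value of a vertex in player `i`'s coalition game with cost `c`. -/
noncomputable def coalVal (A : Arena V n) (i : Fin n) (c : (ℕ → V) → ℝ≥0∞) (v : V) :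
    ℝ≥0∞ :=
  valIS (coalition A i) c v

/-- Players whose reachability objective is satisfied by `π`. -/
def satReach (T : Fin n → Set V) (π : ℕ → V) : Set (Fin n) := {i | ∃ j, π j ∈ T i}

/-- Players whose safety objective is satisfied by `π`. -/
def satSafe (T : Fin n → Set V) (π : ℕ → V) : Set (Fin n) := {i | ∀ j, π j ∉ T i}

/-- Players whose Büchi objective is satisfied by `π`. -/
def satBuchi (T : Fin n → Set V) (π : ℕ → V) : Set (Fin n) :=
  {i | ∀ j, ∃ k, j ≤ k ∧ π k ∈ T i}

/-- Players whose co-Büchi objective is satisfied by `π`. -/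
def satCoBuchi (T : Fin n → Set V) (π : ℕ → V) : Set (Fin n) :=
  {i | ∃ j, ∀ k, j ≤ k → π k ∉ T i}

/-- Earliest positions at which the targets visited by `π` are first visited. -/
def visitSet (T : Fin n → Set V) (π : ℕ → V) : Set ℕ :=
  {m | ∃ i, (∃ j, π j ∈ T i) ∧ m = sInf {j | π j ∈ T i}}

/-- A Mealy machine with memory states `M`. -/
structure Mealy (A : Arena V n) (M : Type) where
  init : M
  up : M → V → M
  nxt : M → V → V
  valid : ∀ m v, A.E v (nxt m v)

/-- The strategy `σ` is induced by the Mealy machine `mm`. -/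
def InducedBy {A : Arena V n} {M : Type} (σ : A.Strategy) (mm : Mealy A M) : Prop :=
  ∀ h v, σ.next h v = mm.nxt (h.foldl mm.up mm.init) v

/-- `σ` has memory size at most `b`. -/
def HasMemorySize {A : Arena V n} (σ : A.Strategy) (b : ℕ) : Prop :=
  ∃ (M : Type) (mm : Mealy A M), Finite M ∧ Nat.card M ≤ b ∧ InducedBy σ mm

/-- `σ` is a finite-memory strategy. -/
def FiniteMemory {A : Arena V n} (σ : A.Strategy) : Prop :=
  ∃ (M : Type) (mm : Mealy A M), Finite M ∧ InducedBy σ mm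

/-- The (finite) segment of `π` between positions `a` and `b` is a simple history. -/
def SimpleSeg (π : ℕ → V) (a b : ℕ) : Prop :=
  ∀ m m', a ≤ m → m ≤ b → a ≤ m' → m' ≤ b → π m = π m' → m = m'

/-- The suffix of `π` from position `a` is a simple play. -/
def SimplePlaySeg (π : ℕ → V) (a : ℕ) : Prop :=
  ∀ m m', a ≤ m → a ≤ m' → π m = π m' → m = m'

/-- The suffix of `π` from position `a` is a simple lasso `p c^ω` with `p c`
a simple history. -/
def SimpleLassoSeg (π : ℕ → V) (a : ℕ) : Prop :=
  ∃ k ℓ, 0 < ℓ ∧ (∀ m, a + k ≤ m → π (m + ℓ) = π m) ∧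
    ∀ m m', a ≤ m → m < a + k + ℓ → a ≤ m' → m' < a + k + ℓ → π m = π m' → m = m'

/-- The segment of `π` between positions `a` and `b` is a simple cycle. -/
def SimpleCycleSeg (π : ℕ → V) (a b : ℕ) : Prop :=
  a < b ∧ π b = π a ∧
    ∀ m m', a ≤ m → m < b → a ≤ m' → m' < b → π m = π m' → m = m'

/-- Total weight of a history (a list of vertices). -/
def histWeight (w : V → V → ℕ) : List V → ℕ
  | [] => 0
  | [_] => 0
  | a :: b :: t => w a b + histWeight w (b :: t)

/-- The list of vertices along positions `a..b` (inclusive) of a play. -/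
def segList (π : ℕ → V) (a b : ℕ) : List V :=
  (List.range (b - a + 1)).map fun m => π (a + m)

/-- The segment of `π` between positions `a` and `b` has minimal weight among all
histories that share its first and last vertex and traverse only its vertices. -/
def MinWeightSeg (A : Arena V n) (w : V → V → ℕ) (π : ℕ → V) (a b : ℕ) : Prop :=
  ∀ h : List V, h ≠ [] → List.Chain' A.E h →
    h.head? = some (π a) → h.getLast? = some (π b) →
    (∀ x ∈ h, ∃ m, a ≤ m ∧ m ≤ b ∧ π m = x) →
    histWeight w (segList π a b) ≤ histWeight w h

/-- Given cut positions `p`, segments number `l` and `l'` of `π` carry the same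
vertex sequence. -/
def SegEq (π : ℕ → V) (p : ℕ → ℕ) (l l' : ℕ) : Prop :=
  p (l' + 1) - p l' = p (l + 1) - p l ∧
    ∀ m, m ≤ p (l + 1) - p l → π (p l' + m) = π (p l + m)

/-- There is no cycle of the arena using only vertices of `S` and avoiding `avoid`. -/
def NoCycleAvoid (A : Arena V n) (S : Set V) (avoid : V) : Prop :=
  ¬ ∃ (m : ℕ) (c : ℕ → V), 0 < m ∧ (∀ j, j < m → A.E (c j) (c (j + 1))) ∧
      c m = c 0 ∧ ∀ j, j ≤ m → c j ∈ S ∧ c j ≠ avoid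

end Arena

open Arena

namespace Arena

variable {V : Type} {n : ℕ}

/-! ### Basic infrastructure -/

noncomputable def dsucc (A : Arena V n) (v : V) : V := (A.no_deadlock v).choose

lemma dsucc_edge (A : Arena V n) (v : V) : A.E v (A.dsucc v) := (A.no_deadlock v).choose_spec

noncomputable def dstrat (A : Arena V n) : A.Strategy :=
  ⟨fun _ v => A.dsucc v, fun _ v => A.dsucc_edge v⟩

lemma pref_zero (π : ℕ → V) : pref π 0 = [] := rfl

lemma pref_length (π : ℕ → V) (j : ℕ) : (pref π j).length = j := by simp [pref]

lemma pref_succ (π : ℕ → V) (j : ℕ) : pref π (j + 1) = pref π j ++ [π j] := by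
  simp [pref, List.range_succ]

lemma pref_cons (π : ℕ → V) (j : ℕ) :
    pref π (j + 1) = π 0 :: pref (fun t => π (t + 1)) j := by
  simp [pref, List.range_succ_eq_map, List.map_map]

lemma pref_congr {π π' : ℕ → V} {j : ℕ} (h : ∀ t, t < j → π t = π' t) :
    pref π j = pref π' j := by
  unfold pref
  apply List.map_congr_left
  intro t ht
  exact h t (List.mem_range.1 ht)

lemma pref_getD {π : ℕ → V} {j t : ℕ} (h : t < j) (d : V) :
    (pref π j).getD t d = π t := by
  rw [List.getD_eq_getElem _ _ (by simpa [pref_length] using h)]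
  simp [pref]

lemma pref_drop (π : ℕ → V) (a t : ℕ) :
    (pref π (a + t)).drop a = pref (fun m => π (a + m)) t := by
  unfold pref
  rw [List.range_add, List.map_append, List.drop_append_of_le_length (by simp)]
  simp [List.map_map, Function.comp, List.drop_eq_nil_of_le]

lemma pref_headD (π : ℕ → V) (t : ℕ) (d : V) :
    (pref π (t + 1)).headD d = π 0 := by
  rw [pref_cons]; rfl

/-! ### Outcome lemmas -/

lemma outcome_zero (A : Arena V n) (σ : Fin n → A.Strategy) (v0 : V) :
    outcome A σ v0 0 = v0 := rfl

lemma outcomeAux_fst (A : Arena V n) (σ : Fin n → A.Strategy) (v0 : V) (j : ℕ) :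
    (outcomeAux A σ v0 j).1 = pref (outcome A σ v0) j := by
  induction j with
  | zero => rfl
  | succ j ih =>
    show (outcomeAux A σ v0 j).1 ++ [(outcomeAux A σ v0 j).2] = _
    rw [ih, pref_succ]
    rfl

lemma outcome_succ (A : Arena V n) (σ : Fin n → A.Strategy) (v0 : V) (j : ℕ) :
    outcome A σ v0 (j + 1) =
      (σ (A.owner (outcome A σ v0 j))).next (pref (outcome A σ v0) j)
        (outcome A σ v0 j) := by
  show (outcomeAux A σ v0 (j+1)).2 = _
  have : outcomeAux A σ v0 (j+1) =
      ((outcomeAux A σ v0 j).1 ++ [(outcomeAux A σ v0 j).2],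
        (σ (A.owner (outcomeAux A σ v0 j).2)).next (outcomeAux A σ v0 j).1
          (outcomeAux A σ v0 j).2) := rfl
  rw [this]
  rw [show (outcomeAux A σ v0 j).1 = pref (outcome A σ v0) j from outcomeAux_fst A σ v0 j]
  rfl

lemma isPlay_outcome (A : Arena V n) (σ : Fin n → A.Strategy) (v0 : V) :
    A.IsPlay (outcome A σ v0) := by
  intro j
  rw [outcome_succ]
  exact (σ _).valid _ _

lemma consistent_outcome (A : Arena V n) (σ : Fin n → A.Strategy) (v0 : V) (i : Fin n) :
    A.Consistent i (σ i) (outcome A σ v0) := by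
  intro j hj
  rw [outcome_succ, hj]

lemma outcome_eq {A : Arena V n} {σ : Fin n → A.Strategy} {v0 : V} {ρ : ℕ → V}
    (h0 : ρ 0 = v0) (hc : ∀ i, A.Consistent i (σ i) ρ) :
    outcome A σ v0 = ρ := by
  have key : ∀ j, outcome A σ v0 j = ρ j := by
    intro j
    induction j using Nat.strong_induction_on with
    | _ j ih =>
      match j with
      | 0 => simpa [outcome_zero] using h0.symm
      | j + 1 =>
        rw [outcome_succ]
        have hpr : pref (outcome A σ v0) j = pref ρ j :=
          pref_congr (fun t ht => ih t (Nat.lt_succ_of_lt ht))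
        rw [hpr, ih j (Nat.lt_succ_self j)]
        exact (hc (A.owner (ρ j)) j rfl).symm

  funext j
  exact key j

/-- The strategy that mimics a given play. -/
noncomputable def mimic (A : Arena V n) (ρ : ℕ → V) (hρ : A.IsPlay ρ) : A.Strategy where
  next h v := if v = ρ h.length then ρ (h.length + 1) else A.dsucc v
  valid h v := by
    split_ifs with h'
    · rw [h']; exact hρ _
    · exact A.dsucc_edge v

lemma consistent_mimic {A : Arena V n} {ρ : ℕ → V} (hρ : A.IsPlay ρ) (i : Fin n) :
    A.Consistent i (A.mimic ρ hρ) ρ := by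
  intro j _
  simp [mimic, pref_length]

end Arena

namespace Arena

variable {V : Type} {n : ℕ}

/-! ### Weight sums and shortest-path cost -/

/-- Accumulated (natural-number) weight of the first `j` edges of a play. -/
def bwN (w : V → V → ℕ) (ρ : ℕ → V) (j : ℕ) : ℕ :=
  ∑ t ∈ Finset.range j, w (ρ t) (ρ (t + 1))

lemma bwN_zero (w : V → V → ℕ) (ρ : ℕ → V) : bwN w ρ 0 = 0 := rfl

lemma bwN_succ (w : V → V → ℕ) (ρ : ℕ → V) (j : ℕ) :
    bwN w ρ (j + 1) = bwN w ρ j + w (ρ j) (ρ (j + 1)) := by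
  simp [bwN, Finset.sum_range_succ]

lemma bwN_mono (w : V → V → ℕ) (ρ : ℕ → V) {a b : ℕ} (h : a ≤ b) :
    bwN w ρ a ≤ bwN w ρ b :=
  Finset.sum_le_sum_of_subset (Finset.range_subset_range.2 h)

lemma bwN_congr {w : V → V → ℕ} {ρ ρ' : ℕ → V} {j : ℕ} (h : ∀ t, t ≤ j → ρ t = ρ' t) :
    bwN w ρ j = bwN w ρ' j := by
  unfold bwN
  apply Finset.sum_congr rfl
  intro t ht
  have ht' := Finset.mem_range.1 ht
  rw [h t ht'.le, h (t+1) ht']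

lemma bwN_add (w : V → V → ℕ) (ρ : ℕ → V) (a b : ℕ) :
    bwN w ρ (a + b) = bwN w ρ a + bwN w (fun m => ρ (a + m)) b := by
  induction b with
  | zero => simp [bwN]
  | succ b ih =>
    rw [show a + (b+1) = (a+b)+1 from rfl, bwN_succ, ih, bwN_succ]
    exact Nat.add_assoc _ _ _

lemma spCost_of_hit {w : V → V → ℕ} {T : Set V} {ρ : ℕ → V} (h : ∃ k, ρ k ∈ T) :
    spCost w T ρ = (bwN w ρ (sInf {k | ρ k ∈ T}) : ℝ≥0∞) := by
  unfold spCost bwN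
  rw [if_pos h]
  push_cast
  rfl

lemma spCost_of_miss {w : V → V → ℕ} {T : Set V} {ρ : ℕ → V} (h : ∀ k, ρ k ∉ T) :
    spCost w T ρ = ⊤ := by
  unfold spCost
  rw [if_neg]
  rintro ⟨k, hk⟩
  exact h k hk

lemma spCost_ne_top_of_hit {w : V → V → ℕ} {T : Set V} {ρ : ℕ → V} (h : ∃ k, ρ k ∈ T) :
    spCost w T ρ ≠ ⊤ := by
  rw [spCost_of_hit h]
  exact ENNReal.natCast_ne_top _

lemma spCost_split {w : V → V → ℕ} {T : Set V} (ρ : ℕ → V) (j : ℕ)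
    (h : ∀ t, t < j → ρ t ∉ T) :
    spCost w T ρ = (bwN w ρ j : ℝ≥0∞) + spCost w T (fun m => ρ (j + m)) := by
  by_cases hh : ∃ k, ρ k ∈ T
  · obtain ⟨k, hk⟩ := hh
    have hkj : j ≤ k := not_lt.1 fun hl => h k hl hk
    have h2 : ∃ m, ρ (j + m) ∈ T := ⟨k - j, by rwa [Nat.add_sub_cancel' hkj]⟩
    have hinf : sInf {k | ρ k ∈ T} = j + sInf {m | ρ (j + m) ∈ T} := by
      apply le_antisymm
      · exact Nat.sInf_le (Nat.sInf_mem h2)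
      · have hmem : sInf {k | ρ k ∈ T} ∈ {k | ρ k ∈ T} := Nat.sInf_mem ⟨k, hk⟩
        have hge : j ≤ sInf {k | ρ k ∈ T} :=
          not_lt.1 fun hl => h _ hl hmem
        have : sInf {m | ρ (j + m) ∈ T} ≤ sInf {k | ρ k ∈ T} - j :=
          Nat.sInf_le (by show ρ (j + (sInf {k | ρ k ∈ T} - j)) ∈ T
                          rwa [Nat.add_sub_cancel' hge])
        omega
    rw [spCost_of_hit ⟨k, hk⟩, spCost_of_hit h2, hinf, bwN_add]
    push_cast
    ring
  · have h2 : ∀ m, ρ (j + m) ∉ T := fun m hm => hh ⟨j + m, hm⟩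
    rw [spCost_of_miss (fun k hk => hh ⟨k, hk⟩), spCost_of_miss h2]
    simp

lemma spCost_congr_upto {w : V → V → ℕ} {T : Set V} {ρ ρ' : ℕ → V} {k : ℕ}
    (hk : ρ k ∈ T) (hmin : ∀ t, t < k → ρ t ∉ T) (hagree : ∀ t, t ≤ k → ρ' t = ρ t) :
    spCost w T ρ' = spCost w T ρ := by
  have hk' : ρ' k ∈ T := by rw [hagree k le_rfl]; exact hk
  have hinf : sInf {t | ρ t ∈ T} = k :=
    le_antisymm (Nat.sInf_le hk) (not_lt.1 fun hl => hmin _ hl (Nat.sInf_mem (⟨k, hk⟩ : ∃ t, ρ t ∈ T)))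
  have hinf' : sInf {t | ρ' t ∈ T} = k := by
    apply le_antisymm (Nat.sInf_le hk')
    apply not_lt.1
    intro hl
    have hmem : ρ' (sInf {t | ρ' t ∈ T}) ∈ T := Nat.sInf_mem (⟨k, hk'⟩ : ∃ t, ρ' t ∈ T)
    have hlt : sInf {t | ρ' t ∈ T} < k := hl
    rw [hagree _ hlt.le] at hmem
    exact hmin _ hlt hmem
  rw [spCost_of_hit ⟨k, hk⟩, spCost_of_hit ⟨k, hk'⟩, hinf, hinf']
  rw [bwN_congr hagree]

lemma spCost_ge {w : V → V → ℕ} {T : Set V} {ρ : ℕ → V} {C : ℕ}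
    (h : ∀ k, ρ k ∈ T → C ≤ bwN w ρ k) : (C : ℝ≥0∞) ≤ spCost w T ρ := by
  by_cases hh : ∃ k, ρ k ∈ T
  · rw [spCost_of_hit hh]
    exact_mod_cast h _ (Nat.sInf_mem hh)
  · rw [spCost_of_miss (fun k hk => hh ⟨k, hk⟩)]
    exact le_top

lemma spCost_le {w : V → V → ℕ} {T : Set V} {ρ : ℕ → V} {k : ℕ} (hk : ρ k ∈ T) :
    spCost w T ρ ≤ (bwN w ρ k : ℝ≥0∞) := by
  rw [spCost_of_hit ⟨k, hk⟩]
  exact_mod_cast bwN_mono w ρ (Nat.sInf_le hk)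

/-! ### Coalition arena -/

lemma fin2_eq_one {x : Fin 2} (h : x ≠ 0) : x = 1 := by
  fin_cases x
  · exact absurd rfl h
  · rfl

lemma coal_owner0 {A : Arena V n} {i : Fin n} {v : V} :
    (coalition A i).owner v = 0 ↔ A.owner v = i := by
  show (if A.owner v = i then (0 : Fin 2) else 1) = 0 ↔ _
  split_ifs with h
  · simpa using h
  · simp [h]

lemma coal_owner1 {A : Arena V n} {i : Fin n} {v : V} :
    (coalition A i).owner v = 1 ↔ A.owner v ≠ i := by
  show (if A.owner v = i then (0 : Fin 2) else 1) = 1 ↔ _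
  split_ifs with h
  · simp [h]
  · simpa using h

end Arena

namespace Arena

variable {V : Type}

/-! ### Determinacy of reachability games -/

lemma mem_win_T {B : Arena V 2} {T : Set V} {v : V} (hT : v ∈ T) :
    v ∈ WinRegion B 0 (ReachObj T) :=
  ⟨B.dstrat, fun ρ _ h0 _ => ⟨0, h0 ▸ hT⟩⟩

lemma win_of_succ {B : Arena V 2} {T : Set V} {v v' : V} (h0 : B.owner v = 0)
    (he : B.E v v') (hv' : v' ∈ WinRegion B 0 (ReachObj T)) :
    v ∈ WinRegion B 0 (ReachObj T) := by
  obtain ⟨S, hS⟩ := hv'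
  refine ⟨⟨fun h u => if h = [] then (if u = v then v' else B.dsucc u)
      else S.next (h.drop 1) u, ?_⟩, ?_⟩
  · intro h u
    split_ifs with h1 h2
    · rw [h2]; exact he
    · exact B.dsucc_edge u
    · exact S.valid _ _
  · intro ρ hρ h0' hcons
    have h1 : ρ 1 = v' := by
      have := hcons 0 (by rw [h0']; exact h0)
      rw [this]
      simp [pref_zero, h0']
    have hsh : B.Consistent 0 S (fun t => ρ (t + 1)) := by
      intro t ht
      show ρ (t + 1 + 1) = S.next (pref (fun m => ρ (m + 1)) t) (ρ (t + 1))
      have hc := hcons (t + 1) ht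
      rw [hc]
      have hne : pref ρ (t + 1) ≠ [] := by
        intro h
        have := pref_length ρ (t + 1)
        rw [h] at this
        simp at this
      dsimp only
      rw [if_neg hne]
      congr 1
      have := pref_drop ρ 1 t
      rw [show 1 + t = t + 1 from Nat.add_comm 1 t] at this
      rw [this]
      exact pref_congr (fun m _ => by rw [Nat.add_comm])
    obtain ⟨t, ht⟩ := hS (fun t => ρ (t + 1)) (fun t => hρ (t + 1)) h1 hsh
    exact ⟨t + 1, ht⟩

lemma win_of_all_succ {B : Arena V 2} {T : Set V} {v : V} (h1 : B.owner v = 1)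
    (hall : ∀ v', B.E v v' → v' ∈ WinRegion B 0 (ReachObj T)) :
    v ∈ WinRegion B 0 (ReachObj T) := by
  have hch : ∀ u : V, ∃ S : B.Strategy, u ∈ WinRegion B 0 (ReachObj T) →
      ∀ ρ, B.IsPlay ρ → ρ 0 = u → B.Consistent 0 S ρ → ρ ∈ ReachObj T := by
    intro u
    by_cases hu : u ∈ WinRegion B 0 (ReachObj T)
    · obtain ⟨S, hS⟩ := hu
      exact ⟨S, fun _ => hS⟩
    · exact ⟨B.dstrat, fun h => absurd h hu⟩
  choose g hg using hch
  refine ⟨⟨fun h u => match h with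
      | [] => B.dsucc u
      | _ :: rest => (g (rest.headD u)).next rest u, ?_⟩, ?_⟩
  · intro h u
    match h with
    | [] => exact B.dsucc_edge u
    | _ :: rest => exact (g _).valid _ _
  · intro ρ hρ h0' hcons
    have hw1 : ρ 1 ∈ WinRegion B 0 (ReachObj T) := hall (ρ 1) (h0' ▸ hρ 0)
    have hsh : B.Consistent 0 (g (ρ 1)) (fun t => ρ (t + 1)) := by
      intro t ht
      show ρ (t + 1 + 1) = (g (ρ 1)).next (pref (fun m => ρ (m + 1)) t) (ρ (t + 1))
      have hc := hcons (t + 1) ht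
      rw [hc, pref_cons]
      show (g ((pref (fun t => ρ (t+1)) t).headD (ρ (t+1)))).next
        (pref (fun t => ρ (t+1)) t) (ρ (t+1)) = _
      congr 2
      match t with
      | 0 => rfl
      | t + 1 => exact pref_headD _ t _
    obtain ⟨t, ht⟩ := hg (ρ 1) hw1 (fun t => ρ (t + 1)) (fun t => hρ (t + 1)) rfl hsh
    exact ⟨t + 1, ht⟩

lemma notwin_succ_zero {B : Arena V 2} {T : Set V} {v v' : V} (h0 : B.owner v = 0)
    (he : B.E v v') (hv : v ∉ WinRegion B 0 (ReachObj T)) :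
    v' ∉ WinRegion B 0 (ReachObj T) :=
  fun hw => hv (win_of_succ h0 he hw)

lemma notwin_exists_succ {B : Arena V 2} {T : Set V} {v : V} (h1 : B.owner v = 1)
    (hv : v ∉ WinRegion B 0 (ReachObj T)) :
    ∃ v', B.E v v' ∧ v' ∉ WinRegion B 0 (ReachObj T) := by
  by_contra hc
  push_neg at hc
  exact hv (win_of_all_succ h1 hc)

/-- A uniform (memoryless) punishing strategy for the safety player. -/
lemma safety_strategy (B : Arena V 2) (T : Set V) :
    ∃ S : B.Strategy, ∀ v, v ∉ WinRegion B 0 (ReachObj T) →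
      ∀ ρ, B.IsPlay ρ → ρ 0 = v → B.Consistent 1 S ρ → ∀ t, ρ t ∉ T := by
  refine ⟨⟨fun _ u => if hu : ∃ u', B.E u u' ∧ u' ∉ WinRegion B 0 (ReachObj T)
      then hu.choose else B.dsucc u, ?_⟩, ?_⟩
  · intro h u
    split_ifs with hu
    · exact hu.choose_spec.1
    · exact B.dsucc_edge u
  · intro v hv ρ hρ h0 hcons
    have key : ∀ t, ρ t ∉ WinRegion B 0 (ReachObj T) := by
      intro t
      induction t with
      | zero => rwa [h0]
      | succ t ih =>
        by_cases ho : B.owner (ρ t) = 0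
        · exact notwin_succ_zero ho (hρ t) ih
        · have ho1 : B.owner (ρ t) = 1 := fin2_eq_one ho
          have hex := notwin_exists_succ ho1 ih
          have hc := hcons t ho1
          rw [hc]
          show (if hu : ∃ u', B.E (ρ t) u' ∧ u' ∉ WinRegion B 0 (ReachObj T)
              then hu.choose else B.dsucc (ρ t)) ∉ _
          rw [dif_pos hex]
          exact hex.choose_spec.2
    exact fun t hT => key t (mem_win_T hT)

end Arena

namespace Arena

variable {V : Type}

/-! ### The budget product arena -/

/-- Product of an arena with a weight accumulator. -/
def prodA (B : Arena V 2) (w : V → V → ℕ) : Arena (V × ℕ) 2 where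
  E p q := B.E p.1 q.1 ∧ q.2 = p.2 + w p.1 q.1
  owner p := B.owner p.1
  no_deadlock p := ⟨(B.dsucc p.1, p.2 + w p.1 (B.dsucc p.1)), B.dsucc_edge p.1, rfl⟩

/-- Extend a history to an eventually-constant infinite sequence. -/
def extend (h : List V) (v : V) : ℕ → V := fun t => (h ++ [v]).getD t v

lemma extend_eq (π : ℕ → V) (k t : ℕ) (ht : t ≤ k) :
    extend (pref π k) (π k) t = π t := by
  unfold extend
  rw [← pref_succ]
  exact pref_getD (Nat.lt_succ_of_le ht) _

/-- Lift a play to the product arena. -/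
def liftP (w : V → V → ℕ) (ρ : ℕ → V) : ℕ → V × ℕ := fun t => (ρ t, bwN w ρ t)

lemma liftP_isPlay {B : Arena V 2} {w : V → V → ℕ} {ρ : ℕ → V} (hρ : B.IsPlay ρ) :
    (prodA B w).IsPlay (liftP w ρ) := by
  intro t
  exact ⟨hρ t, bwN_succ w ρ t⟩

/-- Project a product-arena strategy down to the base arena, recomputing the
accumulated weight from the history. -/
noncomputable def down (B : Arena V 2) (w : V → V → ℕ)
    (PS : (prodA B w).Strategy) : B.Strategy where
  next h v := (PS.next (pref (liftP w (extend h v)) h.length)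
      (v, bwN w (extend h v) h.length)).1
  valid h v := by
    show B.E v (PS.next (pref (liftP w (extend h v)) h.length)
      (v, bwN w (extend h v) h.length)).1
    exact (PS.valid (pref (liftP w (extend h v)) h.length)
      (v, bwN w (extend h v) h.length)).1

lemma down_consistent {B : Arena V 2} {w : V → V → ℕ} {PS : (prodA B w).Strategy}
    {p : Fin 2} {ρ : ℕ → V} (hρ : B.IsPlay ρ)
    (hcons : B.Consistent p (down B w PS) ρ) :
    (prodA B w).Consistent p PS (liftP w ρ) := by
  intro t ht
  have ht' : B.owner (ρ t) = p := ht
  have h1 : ρ (t + 1) = (PS.next (pref (liftP w (extend (pref ρ t) (ρ t))) (pref ρ t).length)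
      (ρ t, bwN w (extend (pref ρ t) (ρ t)) (pref ρ t).length)).1 := hcons t ht'
  have hext : ∀ s, s ≤ t → extend (pref ρ t) (ρ t) s = ρ s := fun s hs => extend_eq ρ t s hs
  have hbw : ∀ s, s ≤ t → bwN w (extend (pref ρ t) (ρ t)) s = bwN w ρ s := by
    intro s hs
    exact bwN_congr (fun u hu => hext u (le_trans hu hs))
  have hpref : pref (liftP w (extend (pref ρ t) (ρ t))) t = pref (liftP w ρ) t := by
    apply pref_congr
    intro s hs
    simp only [liftP]
    rw [hext s hs.le, hbw s hs.le]
  rw [pref_length] at h1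
  rw [hpref, hbw t le_rfl] at h1
  have hfst : ρ (t + 1) = (PS.next (pref (liftP w ρ) t) (ρ t, bwN w ρ t)).1 := h1
  have hval := PS.valid (pref (liftP w ρ) t) (ρ t, bwN w ρ t)
  show (ρ (t+1), bwN w ρ (t+1)) = PS.next (pref (liftP w ρ) t) (ρ t, bwN w ρ t)
  have hsnd : (PS.next (pref (liftP w ρ) t) (ρ t, bwN w ρ t)).2
      = bwN w ρ t + w (ρ t) (ρ (t+1)) := by
    rw [hval.2, ← hfst]
  refine Prod.ext hfst.symm ?_  |>.symm
  rw [hsnd, bwN_succ]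

/-! ### Threshold punishment via the product game -/

lemma threshold_punish {B : Arena V 2} (w : V → V → ℕ) (T : Set V) (C : ℕ) (u : V)
    (hu : ((u, 0) : V × ℕ) ∉
      WinRegion (prodA B w) 0 (ReachObj {p : V × ℕ | p.1 ∈ T ∧ p.2 < C})) :
    ∃ S : B.Strategy, ∀ ρ, B.IsPlay ρ → ρ 0 = u → B.Consistent 1 S ρ →
      (C : ℝ≥0∞) ≤ spCost w T ρ := by
  obtain ⟨PS, hPS⟩ := safety_strategy (prodA B w) {p : V × ℕ | p.1 ∈ T ∧ p.2 < C}
  refine ⟨down B w PS, ?_⟩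
  intro ρ hρ h0 hcons
  have hlift := down_consistent hρ hcons
  have h00 : liftP w ρ 0 = (u, 0) := by simp [liftP, h0, bwN_zero]
  have hstay := hPS (u, 0) hu (liftP w ρ) (liftP_isPlay hρ) h00 hlift
  apply spCost_ge
  intro k hk
  have hnot := hstay k
  simp only [liftP, Set.mem_setOf_eq] at hnot
  by_contra hlt
  exact hnot ⟨hk, by omega⟩

lemma threshold_win {B : Arena V 2} (w : V → V → ℕ) (T : Set V) (C : ℕ) (u : V)
    (hu : ((u, 0) : V × ℕ) ∈
      WinRegion (prodA B w) 0 (ReachObj {p : V × ℕ | p.1 ∈ T ∧ p.2 < C})) :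
    ∃ S : B.Strategy, ∀ ρ, B.IsPlay ρ → ρ 0 = u → B.Consistent 0 S ρ →
      ∃ k, ρ k ∈ T ∧ bwN w ρ k < C := by
  obtain ⟨PS, hPS⟩ := hu
  refine ⟨down B w PS, ?_⟩
  intro ρ hρ h0 hcons
  have hlift := down_consistent hρ hcons
  have h00 : liftP w ρ 0 = (u, 0) := by simp [liftP, h0, bwN_zero]
  obtain ⟨k, hk⟩ := hPS (liftP w ρ) (liftP_isPlay hρ) h00 hlift
  exact ⟨k, hk⟩

/-! ### Value lemmas -/

lemma valIS_le {B : Arena V 2} {c : (ℕ → V) → ℝ≥0∞} {u : V} {x : ℝ≥0∞}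
    (S0 : B.Strategy)
    (h : ∀ ρ, B.IsPlay ρ → ρ 0 = u → B.Consistent 0 S0 ρ → c ρ ≤ x) :
    valIS B c u ≤ x := by
  refine iInf_le_of_le S0 (iSup_le fun σ2 => ?_)
  apply h _ (isPlay_outcome B ![S0, σ2] u) rfl
  have := consistent_outcome B ![S0, σ2] u 0
  simpa using this

lemma exists_lowcost_strategy {B : Arena V 2} {c : (ℕ → V) → ℝ≥0∞} {u : V} {D : ℝ≥0∞}
    (h : valIS B c u < D) :
    ∃ S0 : B.Strategy, ∀ ρ, B.IsPlay ρ → ρ 0 = u → B.Consistent 0 S0 ρ → c ρ < D := by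
  obtain ⟨S0, hS0⟩ := iInf_lt_iff.1 h
  refine ⟨S0, fun ρ hρ h0 hcons => lt_of_le_of_lt ?_ hS0⟩
  have hout : outcome B ![S0, B.mimic ρ hρ] u = ρ := by
    apply outcome_eq h0
    intro i
    fin_cases i
    · simpa using hcons
    · simpa using consistent_mimic hρ 1
  calc c ρ = c (outcome B ![S0, B.mimic ρ hρ] u) := by rw [hout]
    _ ≤ ⨆ σ2, c (outcome B ![S0, σ2] u) :=
        le_iSup (fun σ2 => c (outcome B ![S0, σ2] u)) (B.mimic ρ hρ)

lemma val_punish {B : Arena V 2} (w : V → V → ℕ) (T : Set V) (C : ℕ) (u : V)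
    (hval : (C : ℝ≥0∞) ≤ valIS B (spCost w T) u) :
    ∃ S : B.Strategy, ∀ ρ, B.IsPlay ρ → ρ 0 = u → B.Consistent 1 S ρ →
      (C : ℝ≥0∞) ≤ spCost w T ρ := by
  rcases Nat.eq_zero_or_pos C with hC | hC
  · exact ⟨B.dstrat, fun ρ _ _ _ => by simp [hC]⟩
  by_cases hu : ((u, 0) : V × ℕ) ∈
      WinRegion (prodA B w) 0 (ReachObj {p : V × ℕ | p.1 ∈ T ∧ p.2 < C})
  · exfalso
    obtain ⟨S0, hS0⟩ := threshold_win w T C u hu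
    have hle : valIS B (spCost w T) u ≤ ((C - 1 : ℕ) : ℝ≥0∞) := by
      apply valIS_le S0
      intro ρ hρ h0 hcons
      obtain ⟨k, hk, hb⟩ := hS0 ρ hρ h0 hcons
      calc spCost w T ρ ≤ (bwN w ρ k : ℝ≥0∞) := spCost_le hk
        _ ≤ ((C - 1 : ℕ) : ℝ≥0∞) := by exact_mod_cast Nat.le_sub_one_of_lt hb
    have : (C : ℝ≥0∞) ≤ ((C - 1 : ℕ) : ℝ≥0∞) := le_trans hval hle
    have : C ≤ C - 1 := by exact_mod_cast this
    omega
  · exact threshold_punish w T C u hu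

end Arena

namespace Arena

variable {V : Type} {n : ℕ}

/-- Deviation of player `i`: follow `π` up to position `j`, then switch to the
coalition-game strategy `S`. -/
lemma deviation_strategy (A : Arena V n) (π : ℕ → V) (hπ : A.IsPlay π)
    (σ : Fin n → A.Strategy) (hconsπ : ∀ p, A.Consistent p (σ p) π)
    (i : Fin n) (j : ℕ) (S : (coalition A i).Strategy) :
    ∃ τ : A.Strategy,
      (∀ t, t ≤ j → outcome A (Function.update σ i τ) (π 0) t = π t) ∧
      Consistent (coalition A i) 0 S
        (fun t => outcome A (Function.update σ i τ) (π 0) (j + t)) := by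
  obtain ⟨τ, hτ1, hτ2⟩ : ∃ τ : A.Strategy,
      (∀ h v, h.length < j → v = π h.length → τ.next h v = π (h.length + 1)) ∧
      (∀ h v, ¬ h.length < j → τ.next h v = S.next (h.drop j) v) := by
    refine ⟨⟨fun h v => if h.length < j ∧ v = π h.length then π (h.length + 1)
        else S.next (h.drop j) v, ?_⟩, ?_, ?_⟩
    · intro h v
      split_ifs with h'
      · rw [h'.2]; exact hπ h.length
      · exact S.valid _ _
    · intro h v h1 h2
      show (if h.length < j ∧ v = π h.length then π (h.length + 1)
        else S.next (h.drop j) v) = _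
      rw [if_pos ⟨h1, h2⟩]
    · intro h v h1
      show (if h.length < j ∧ v = π h.length then π (h.length + 1)
        else S.next (h.drop j) v) = _
      rw [if_neg (fun hc => h1 hc.1)]
  have hpre : ∀ t, t ≤ j → outcome A (Function.update σ i τ) (π 0) t = π t := by
    intro t
    induction t using Nat.strong_induction_on with
    | _ t ih =>
      intro ht
      match t, ht, ih with
      | 0, _, _ => rfl
      | t + 1, ht, ih =>
        have ht' : t < j := ht
        have hdevt := ih t (Nat.lt_succ_self t) ht'.le
        have hpref : pref (outcome A (Function.update σ i τ) (π 0)) t = pref π t :=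
          pref_congr fun s hs =>
            ih s (Nat.lt_succ_of_lt hs) (le_of_lt (lt_of_lt_of_le hs ht'.le))
        rw [outcome_succ, hpref, hdevt]
        by_cases how : A.owner (π t) = i
        · rw [how, Function.update_self]
          rw [hτ1 _ _ (by rw [pref_length]; exact ht') (by rw [pref_length])]
          rw [pref_length]
        · rw [Function.update_of_ne how]
          exact (hconsπ _ t rfl).symm
  refine ⟨τ, hpre, ?_⟩
  intro t ht
  have howner : A.owner (outcome A (Function.update σ i τ) (π 0) (j + t)) = i :=
    coal_owner0.1 ht
  show outcome A (Function.update σ i τ) (π 0) (j + t + 1) =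
    S.next (pref (fun m => outcome A (Function.update σ i τ) (π 0) (j + m)) t)
      (outcome A (Function.update σ i τ) (π 0) (j + t))
  rw [outcome_succ, howner, Function.update_self]
  rw [hτ2 _ _ (by rw [pref_length]; omega)]
  rw [pref_drop]

end Arena

namespace Arena

variable {V : Type} {n : ℕ}

lemma ne_forward (A : Arena V n) (T : Fin n → Set V) (w : Fin n → V → V → ℕ)
    (π : ℕ → V) (hπ : A.IsPlay π) (σ : Fin n → A.Strategy)
    (hNE : A.IsNECost (fun i => spCost (w i) (T i)) σ (π 0))
    (hout : outcome A σ (π 0) = π) :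
    (∀ i, (∀ k, π k ∉ T i) → ∀ j, π j ∉ coalWin A i (ReachObj (T i))) ∧
      (∀ i, (∃ k, π k ∈ T i) → ∀ j ≤ sInf {k | π k ∈ T i},
        spCost (w i) (T i) (fun m => π (j + m)) ≤
          coalVal A i (spCost (w i) (T i)) (π j)) := by
  have hconsπ : ∀ p, A.Consistent p (σ p) π := by
    intro p
    have := consistent_outcome A σ (π 0) p
    rwa [hout] at this
  constructor
  · -- safety condition
    intro i hmiss j hj
    simp only [coalWin, WinRegion, Set.mem_setOf_eq] at hj
    obtain ⟨S, hS⟩ := hj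
    obtain ⟨τ, hpre, hconsS⟩ := deviation_strategy A π hπ σ hconsπ i j S
    have hNEi : spCost (w i) (T i) (outcome A σ (π 0)) ≤
        spCost (w i) (T i) (outcome A (Function.update σ i τ) (π 0)) := hNE i τ
    rw [hout] at hNEi
    have htop : spCost (w i) (T i) π = ⊤ := spCost_of_miss hmiss
    rw [htop] at hNEi
    have hdevtop : spCost (w i) (T i) (outcome A (Function.update σ i τ) (π 0)) = ⊤ :=
      top_le_iff.1 hNEi
    have hρplay : (coalition A i).IsPlay
        (fun t => outcome A (Function.update σ i τ) (π 0) (j + t)) :=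
      fun t => isPlay_outcome A (Function.update σ i τ) (π 0) (j + t)
    have hρ0 : outcome A (Function.update σ i τ) (π 0) (j + 0) = π j := hpre j le_rfl
    obtain ⟨t, ht⟩ := hS _ hρplay hρ0 hconsS
    exact spCost_ne_top_of_hit ⟨j + t, ht⟩ hdevtop
  · -- value condition
    intro i hhit j hj
    by_contra hlt
    rw [not_le] at hlt
    obtain ⟨S0, hS0⟩ := exists_lowcost_strategy (B := coalition A i) hlt
    obtain ⟨τ, hpre, hconsS⟩ := deviation_strategy A π hπ σ hconsπ i j S0
    have hρplay : (coalition A i).IsPlay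
        (fun t => outcome A (Function.update σ i τ) (π 0) (j + t)) :=
      fun t => isPlay_outcome A (Function.update σ i τ) (π 0) (j + t)
    have hρ0 : outcome A (Function.update σ i τ) (π 0) (j + 0) = π j := hpre j le_rfl
    have hcost := hS0 _ hρplay hρ0 hconsS
    have hNEi : spCost (w i) (T i) (outcome A σ (π 0)) ≤
        spCost (w i) (T i) (outcome A (Function.update σ i τ) (π 0)) := hNE i τ
    rw [hout] at hNEi
    have hπsplit : spCost (w i) (T i) π =
        (bwN (w i) π j : ℝ≥0∞) + spCost (w i) (T i) (fun m => π (j + m)) :=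
      spCost_split π j (fun t ht => Nat.notMem_of_lt_sInf (lt_of_lt_of_le ht hj))
    have hdsplit : spCost (w i) (T i) (outcome A (Function.update σ i τ) (π 0)) =
        (bwN (w i) (outcome A (Function.update σ i τ) (π 0)) j : ℝ≥0∞) +
          spCost (w i) (T i)
            (fun m => outcome A (Function.update σ i τ) (π 0) (j + m)) :=
      spCost_split _ j (fun t ht => by
        rw [hpre t ht.le]
        exact Nat.notMem_of_lt_sInf (lt_of_lt_of_le ht hj))
    have hbw : bwN (w i) (outcome A (Function.update σ i τ) (π 0)) j = bwN (w i) π j :=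
      bwN_congr (fun t ht => hpre t ht)
    rw [hπsplit, hdsplit, hbw] at hNEi
    have hD := (ENNReal.add_le_add_iff_left (ENNReal.natCast_ne_top (bwN (w i) π j))).1 hNEi
    exact absurd hcost (not_lt.2 hD)

end Arena

namespace Arena

variable {V : Type} {n : ℕ}

lemma ne_backward (A : Arena V n) (T : Fin n → Set V) (w : Fin n → V → V → ℕ)
    (π : ℕ → V) (hπ : A.IsPlay π)
    (hA : ∀ i, (∀ k, π k ∉ T i) → ∀ j, π j ∉ coalWin A i (ReachObj (T i)))
    (hB : ∀ i, (∃ k, π k ∈ T i) → ∀ j ≤ sInf {k | π k ∈ T i},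
        spCost (w i) (T i) (fun m => π (j + m)) ≤
          coalVal A i (spCost (w i) (T i)) (π j)) :
    ∃ σ : Fin n → A.Strategy,
      A.IsNECost (fun i => spCost (w i) (T i)) σ (π 0) ∧ outcome A σ (π 0) = π := by
  -- Punishment strategies.
  have hex : ∀ (i : Fin n) (q : ℕ), ∃ S : (coalition A i).Strategy,
      ((∀ k, π k ∉ T i) ∨ q ≤ sInf {k | π k ∈ T i}) →
      ∀ ρ : ℕ → V, A.IsPlay ρ → ρ 0 = π q → Consistent (coalition A i) 1 S ρ →
        spCost (w i) (T i) π ≤ (bwN (w i) π q : ℝ≥0∞) + spCost (w i) (T i) ρ := by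
    intro i q
    by_cases hmiss : ∀ k, π k ∉ T i
    · obtain ⟨S, hS⟩ := safety_strategy (coalition A i) (T i)
      refine ⟨S, fun _ ρ hρ h0 hcons => ?_⟩
      have hstay := hS (π q) (hA i hmiss q) ρ hρ h0 hcons
      have hρtop : spCost (w i) (T i) ρ = ⊤ := spCost_of_miss hstay
      rw [spCost_of_miss hmiss, hρtop]
      simp
    · push_neg at hmiss
      by_cases hq : q ≤ sInf {k | π k ∈ T i}
      · have h2 : ∃ m, π (q + m) ∈ T i := by
          refine ⟨sInf {k | π k ∈ T i} - q, ?_⟩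
          rw [Nat.add_sub_cancel' hq]
          exact Nat.sInf_mem hmiss
        have hval : ((bwN (w i) (fun m => π (q + m))
              (sInf {m | π (q + m) ∈ T i}) : ℕ) : ℝ≥0∞)
            ≤ valIS (coalition A i) (spCost (w i) (T i)) (π q) := by
          have hb := hB i hmiss q hq
          rwa [spCost_of_hit h2] at hb
        obtain ⟨S, hS⟩ := val_punish (B := coalition A i) (w i) (T i) _ (π q) hval
        refine ⟨S, fun _ ρ hρ h0 hcons => ?_⟩
        have hsplit := spCost_split (w := w i) (T := T i) π q
          (fun t ht => Nat.notMem_of_lt_sInf (lt_of_lt_of_le ht hq))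
        rw [hsplit, spCost_of_hit h2]
        exact add_le_add_right (hS ρ hρ h0 hcons) _
      · refine ⟨(coalition A i).dstrat, fun hcond => ?_⟩
        exfalso
        rcases hcond with h | h
        · obtain ⟨k, hk⟩ := hmiss
          exact h k hk
        · exact hq h
  choose punS hpunS using hex
  -- The main strategy.
  obtain ⟨θ, hθ1, hθ2⟩ : ∃ θ : A.Strategy,
      (∀ h v, (∀ t, t < (h ++ [v]).length → (h ++ [v]).getD t (π 0) = π t) →
        θ.next h v = π (h.length + 1)) ∧
      (∀ h v (m : ℕ), m ≠ 0 →
        sInf {t | t < (h ++ [v]).length ∧ (h ++ [v]).getD t (π 0) ≠ π t} = m →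
        ¬ (∀ t, t < (h ++ [v]).length → (h ++ [v]).getD t (π 0) = π t) →
        θ.next h v = (punS (A.owner (π (m - 1))) (m - 1)).next (h.drop (m - 1)) v) := by
    have hgetD : ∀ (h : List V) (v d : V), (h ++ [v]).getD h.length d = v := by
      intro h v d
      rw [List.getD_eq_getElem _ _ (by simp)]
      simp
    refine ⟨⟨fun h v =>
      if hgood : ∀ t, t < (h ++ [v]).length → (h ++ [v]).getD t (π 0) = π t
      then π (h.length + 1)
      else if sInf {t | t < (h ++ [v]).length ∧ (h ++ [v]).getD t (π 0) ≠ π t} = 0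
        then A.dsucc v
        else (punS (A.owner (π (sInf {t | t < (h ++ [v]).length ∧
              (h ++ [v]).getD t (π 0) ≠ π t} - 1)))
            (sInf {t | t < (h ++ [v]).length ∧ (h ++ [v]).getD t (π 0) ≠ π t} - 1)).next
          (h.drop (sInf {t | t < (h ++ [v]).length ∧
              (h ++ [v]).getD t (π 0) ≠ π t} - 1)) v, ?_⟩, ?_, ?_⟩
    · intro h v
      split_ifs with hgood h0
      · have hv := hgood h.length (by simp)
        rw [hgetD] at hv
        rw [hv]
        exact hπ h.length
      · exact A.dsucc_edge v
      · exact (punS _ _).valid _ _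
    · intro h v hgood
      show (if hgood : ∀ t, t < (h ++ [v]).length → (h ++ [v]).getD t (π 0) = π t
        then π (h.length + 1) else _) = _
      rw [dif_pos hgood]
    · intro h v m hm0 hminf hbad
      show (if hgood : ∀ t, t < (h ++ [v]).length → (h ++ [v]).getD t (π 0) = π t
        then π (h.length + 1) else _) = _
      rw [dif_neg hbad]
      rw [hminf]
      rw [if_neg hm0]
  -- The outcome of the main profile is π.
  have hgoodpref : ∀ k, ∀ t, t < (pref π k ++ [π k]).length →
      (pref π k ++ [π k]).getD t (π 0) = π t := by
    intro k t ht
    have hlen : (pref π k ++ [π k]).length = k + 1 := by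
      rw [← pref_succ, pref_length]
    rw [hlen] at ht
    rw [← pref_succ]
    exact pref_getD ht _
  have hconsθ : ∀ p : Fin n, A.Consistent p θ π := by
    intro p t _
    rw [hθ1 (pref π t) (π t) (hgoodpref t), pref_length]
  have hout : outcome A (fun _ => θ) (π 0) = π := outcome_eq rfl (fun p => hconsθ p)
  -- Evaluating θ after a divergence.
  have hθdev : ∀ (g : ℕ → V) (k m0 : ℕ), m0 ≠ 0 → m0 ≤ k → g m0 ≠ π m0 →
      (∀ t, t < m0 → g t = π t) →
      θ.next (pref g k) (g k) =
        (punS (A.owner (π (m0 - 1))) (m0 - 1)).next ((pref g k).drop (m0 - 1)) (g k) := by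
    intro g k m0 hm00 hm0k hm0 hltm
    have hsval : pref g k ++ [g k] = pref g (k + 1) := (pref_succ g k).symm
    have hlen2 : (pref g k ++ [g k]).length = k + 1 := by rw [hsval, pref_length]
    have hgd : ∀ s, s ≤ k → (pref g k ++ [g k]).getD s (π 0) = g s := by
      intro s hs
      rw [hsval]
      exact pref_getD (by omega) _
    have hbad : ¬ ∀ s, s < (pref g k ++ [g k]).length →
        (pref g k ++ [g k]).getD s (π 0) = π s := by
      intro hc
      apply hm0
      have h3 := hc m0 (by rw [hlen2]; omega)
      rwa [hgd m0 (by omega)] at h3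
    have hm0mem : m0 ∈ {s | s < (pref g k ++ [g k]).length ∧
        (pref g k ++ [g k]).getD s (π 0) ≠ π s} :=
      ⟨by rw [hlen2]; omega, by rw [hgd m0 (by omega)]; exact hm0⟩
    have hsinf : sInf {s | s < (pref g k ++ [g k]).length ∧
        (pref g k ++ [g k]).getD s (π 0) ≠ π s} = m0 := by
      apply le_antisymm (Nat.sInf_le hm0mem)
      by_contra hlt2
      push_neg at hlt2
      obtain ⟨hl1, hl2⟩ := Nat.sInf_mem (⟨m0, hm0mem⟩ : Set.Nonempty _)
      apply hl2
      rw [hlen2] at hl1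
      rw [hgd _ (by omega)]
      exact hltm _ hlt2
    exact hθ2 (pref g k) (g k) m0 hm00 hsinf hbad
  -- Nash equilibrium.
  refine ⟨fun _ => θ, ?_, hout⟩
  intro i τ
  show spCost (w i) (T i) (outcome A (fun _ => θ) (π 0)) ≤
    spCost (w i) (T i) (outcome A (Function.update (fun _ => θ) i τ) (π 0))
  rw [hout]
  set dev := outcome A (Function.update (fun _ => θ) i τ) (π 0) with hdev
  have hdevsucc : ∀ k, dev (k + 1) =
      (Function.update (fun _ => θ) i τ (A.owner (dev k))).next (pref dev k) (dev k) := by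
    intro k
    rw [hdev]
    exact outcome_succ _ _ _ k
  have hdev0 : dev 0 = π 0 := by rw [hdev]; rfl
  have hdevplay : A.IsPlay dev := by rw [hdev]; exact isPlay_outcome _ _ _
  by_cases hdiv : ∃ t, dev t ≠ π t
  · have hne : {t | dev t ≠ π t}.Nonempty := hdiv
    set m0 := sInf {t | dev t ≠ π t} with hm0def
    have hm0 : dev m0 ≠ π m0 := Nat.sInf_mem hne
    have hlt : ∀ t, t < m0 → dev t = π t := fun t ht =>
      not_not.1 (Nat.notMem_of_lt_sInf ht)
    have hm0pos : m0 ≠ 0 := by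
      intro h
      apply hm0
      rw [h]
      exact hdev0
    obtain ⟨q, hq⟩ : ∃ q, m0 = q + 1 := ⟨m0 - 1, by omega⟩
    have hqlt : q < m0 := by omega
    have hpq : pref dev q = pref π q :=
      pref_congr (fun s hs => hlt s (lt_trans hs hqlt))
    have howq : A.owner (π q) = i := by
      by_contra hnei
      apply hm0
      rw [hq, hdevsucc q, hpq, hlt q hqlt, Function.update_of_ne hnei]
      show θ.next (pref π q) (π q) = π (q + 1)
      rw [hθ1 (pref π q) (π q) (hgoodpref q), pref_length]
    have hρplay : A.IsPlay (fun t => dev (q + t)) := fun t => hdevplay (q + t)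
    have hρ0 : dev (q + 0) = π q := hlt q hqlt
    have hconsρ : Consistent (coalition A i) 1 (punS i q) (fun t => dev (q + t)) := by
      intro t ht
      cases t with
      | zero =>
        exfalso
        apply coal_owner1.1 ht
        show A.owner (dev (q + 0)) = i
        rw [hρ0]
        exact howq
      | succ t =>
        have ht' : A.owner (dev (q + (t + 1))) ≠ i := coal_owner1.1 ht
        show dev (q + (t + 1) + 1) =
          (punS i q).next (pref (fun m => dev (q + m)) (t + 1)) (dev (q + (t + 1)))
        rw [hdevsucc (q + (t + 1)), Function.update_of_ne ht']
        show θ.next (pref dev (q + (t + 1))) (dev (q + (t + 1))) = _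
        rw [hθdev dev (q + (t + 1)) m0 hm0pos (by omega) hm0 hlt]
        rw [show m0 - 1 = q from by omega, howq]
        congr 1
        exact pref_drop dev q (t + 1)
    by_cases hmiss : ∀ k, π k ∉ T i
    · have hg := hpunS i q (Or.inl hmiss) (fun t => dev (q + t)) hρplay hρ0 hconsρ
      have hdsplit := spCost_split (w := w i) (T := T i) dev q
        (fun t ht => by rw [hlt t (lt_trans ht hqlt)]; exact hmiss t)
      rw [hdsplit, bwN_congr (fun t ht => hlt t (by omega))]
      exact hg
    · push_neg at hmiss
      by_cases hqle : q ≤ sInf {k | π k ∈ T i}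
      · have hg := hpunS i q (Or.inr hqle) (fun t => dev (q + t)) hρplay hρ0 hconsρ
        have hdsplit := spCost_split (w := w i) (T := T i) dev q
          (fun t ht => by
            rw [hlt t (lt_trans ht hqlt)]
            exact Nat.notMem_of_lt_sInf (lt_of_lt_of_le ht hqle))
        rw [hdsplit, bwN_congr (fun t ht => hlt t (by omega))]
        exact hg
      · push_neg at hqle
        have hk := Nat.sInf_mem hmiss
        have heq : spCost (w i) (T i) dev = spCost (w i) (T i) π :=
          spCost_congr_upto hk (fun t ht => Nat.notMem_of_lt_sInf ht)
            (fun t ht => hlt t (by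
              have ht' : t ≤ sInf {k | π k ∈ T i} := ht
              omega))
        rw [heq]
  · push_neg at hdiv
    rw [funext hdiv]

end Arena

/-- Characterisation of Nash-equilibrium outcomes in shortest-path
games (with one target and weight function per player). -/
theorem ne_outcome_characterisation_spath
    (V : Type) (n : ℕ) (A : Arena V n) (T : Fin n → Set V) (w : Fin n → V → V → ℕ)
    (π : ℕ → V) (hπ : A.IsPlay π) :
    (∃ σ : Fin n → A.Strategy,
        A.IsNECost (fun i => spCost (w i) (T i)) σ (π 0) ∧ outcome A σ (π 0) = π) ↔
      ((∀ i, (∀ k, π k ∉ T i) → ∀ j, π j ∉ coalWin A i (ReachObj (T i))) ∧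
        (∀ i, (∃ k, π k ∈ T i) → ∀ j ≤ sInf {k | π k ∈ T i},
          spCost (w i) (T i) (fun m => π (j + m)) ≤
            coalVal A i (spCost (w i) (T i)) (π j))) := by
  constructor
  · rintro ⟨σ, hNE, hout⟩
    exact ne_forward A T w π hπ σ hNE hout
  · rintro ⟨hA, hB⟩
    exact ne_backward A T w π hπ hA hB
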